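/- Let M > 0, Q ∈ ℝ with Q ≠ 0, and a ∈ ℝ. Then the quadratic form (λ, X) ↦ (3M/2)·( 3Ma/(8Q²) − 1 )·λ² + (1/2)·( 3Ma/(8Q²) − 1 )·X·λ + ( a/(64Q²) )·X² is nonnegative for all real λ and X if and only if a ≥ 8Q²/(3M). -/
import Mathlib


/-- Sylvester-type criterion for the boundary quadratic form at the final sphere:
it is positive semi-definite exactly when `a ≥ 8Q²/(3M)`. -/
theorem boundary_quadratic_form_nonneg_iff
    (M Q a : ℝ) (hM : 0 < M) (hQ : Q ≠ 0) :
    (∀ lam X : ℝ,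
        0 ≤ (3 * M / 2) * (3 * M * a / (8 * Q ^ 2) - 1) * lam ^ 2
          + (1 / 2) * (3 * M * a / (8 * Q ^ 2) - 1) * X * lam
          + (a / (64 * Q ^ 2)) * X ^ 2)
      ↔ 8 * Q ^ 2 / (3 * M) ≤ a := by
  have hQ2 : (0:ℝ) < Q ^ 2 := by positivity
  constructor
  · intro h
    have h1 := h 1 0
    simp only [one_pow, mul_one, mul_zero, zero_mul, add_zero, zero_pow, ne_eq] at h1
    have hc : 0 ≤ 3 * M * a / (8 * Q ^ 2) - 1 := by nlinarith
    rw [div_le_iff₀ (by positivity)]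
    rw [sub_nonneg, le_div_iff₀ (by positivity)] at hc
    nlinarith
  · intro h lam X
    have ha : 0 < a := lt_of_lt_of_le (by positivity) h
    have hc : 0 ≤ 3 * M * a / (8 * Q ^ 2) - 1 := by
      rw [sub_nonneg, le_div_iff₀ (by positivity)]
      rw [div_le_iff₀ (by positivity)] at h
      nlinarith
    have ha64 : a / (64 * Q ^ 2) = (3 * M * a / (8 * Q ^ 2) - 1 + 1) / (24 * M) := by
      field_simp
      ring
    rw [ha64]
    set u := 3 * M * a / (8 * Q ^ 2) - 1 with hu
    have key : (3 * M / 2) * u * lam ^ 2 + (1 / 2) * u * X * lam + (u + 1) / (24 * M) * X ^ 2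
        = (u * (6 * M * lam + X) ^ 2 + X ^ 2) / (24 * M) := by
      field_simp
      ring
    rw [key]
    positivity
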